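/- Let A be a positive definite Hermitian d×d complex matrix. Then log A = ∫₀^∞ ( (1+s)⁻¹·I − (A + s·I)⁻¹ ) ds, where the integral of the matrix-valued function converges entrywise (equivalently, in the Bochner sense). -/

import Mathlib

open Matrix MeasureTheory
open scoped ComplexOrder

noncomputable section

/-- Logarithm of a matrix: for a Hermitian matrix, apply the real logarithm to the
eigenvalues via the spectral decomposition (functional calculus); junk value `0`
for non-Hermitian matrices. -/
def matLog {d : ℕ} (A : Matrix (Fin d) (Fin d) ℂ) : Matrix (Fin d) (Fin d) ℂ :=
  if hA : A.IsHermitian then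
    (hA.eigenvectorUnitary : Matrix (Fin d) (Fin d) ℂ) *
      Matrix.diagonal (fun i => (Real.log (hA.eigenvalues i) : ℂ)) *
      (star hA.eigenvectorUnitary : Matrix (Fin d) (Fin d) ℂ)
  else 0

/-- The absolute value `|A| = √(AᴴA)` of a matrix. -/
def matAbs {d : ℕ} (A : Matrix (Fin d) (Fin d) ℂ) : Matrix (Fin d) (Fin d) ℂ :=
  ((Matrix.posSemidef_conjTranspose_mul_self A).1.eigenvectorUnitary : Matrix (Fin d) (Fin d) ℂ) *
    Matrix.diagonal ((↑) ∘ (√·) ∘ (Matrix.posSemidef_conjTranspose_mul_self A).1.eigenvalues) *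
    (star (Matrix.posSemidef_conjTranspose_mul_self A).1.eigenvectorUnitary : Matrix (Fin d) (Fin d) ℂ)

/-- The trace norm `‖A‖₁ = tr √(AᴴA)`. -/
def traceNorm {d : ℕ} (A : Matrix (Fin d) (Fin d) ℂ) : ℝ :=
  ((matAbs A).trace).re

/-- The positive part `A₊ = (A + |A|)/2` of a (Hermitian) matrix. -/
def matPos {d : ℕ} (A : Matrix (Fin d) (Fin d) ℂ) : Matrix (Fin d) (Fin d) ℂ :=
  (2⁻¹ : ℂ) • (A + matAbs A)

/-- The negative part `A₋ = (|A| − A)/2` of a (Hermitian) matrix. -/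
def matNeg {d : ℕ} (A : Matrix (Fin d) (Fin d) ℂ) : Matrix (Fin d) (Fin d) ℂ :=
  (2⁻¹ : ℂ) • (matAbs A - A)

/-- The quantum relative entropy `S(ρ‖σ) = tr ρ (log ρ − log σ)`. -/
def relEnt {d : ℕ} (ρ σ : Matrix (Fin d) (Fin d) ℂ) : ℝ :=
  ((ρ * (matLog ρ - matLog σ)).trace).re

/-- Smallest eigenvalue of a Hermitian matrix. -/
def lamMin {d : ℕ} {A : Matrix (Fin d) (Fin d) ℂ} (hA : A.IsHermitian) : ℝ :=
  ⨅ i, hA.eigenvalues i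

/-- The asymmetry function of the binary Kullback–Leibler divergence:
`a(p,t) = (2p+t)·log(1+t/p) + (2(1−p)−t)·log(1−t/(1−p))`. -/
def asym (p t : ℝ) : ℝ :=
  (2 * p + t) * Real.log (1 + t / p) + (2 * (1 - p) - t) * Real.log (1 - t / (1 - p))

attribute [local instance] Matrix.frobeniusNormedAddCommGroup Matrix.frobeniusNormedSpace

instance matFrobeniusContinuousENorm {d : ℕ} : ContinuousENorm (Matrix (Fin d) (Fin d) ℂ) :=
  SeminormedAddGroup.toContinuousENorm

instance matFrobeniusESeminormed {d : ℕ} : ESeminormedAddCommMonoid (Matrix (Fin d) (Fin d) ℂ) :=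
  NormedAddCommGroup.toENormedAddCommMonoid.toESeminormedAddCommMonoid

open Set Filter in
lemma scalar_aux {lam : ℝ} (hlam : 0 < lam) :
    IntegrableOn (fun s : ℝ => (1 + s)⁻¹ - (lam + s)⁻¹) (Set.Ioi 0) volume ∧
    ∫ s in Set.Ioi (0:ℝ), ((1 + s)⁻¹ - (lam + s)⁻¹) = Real.log lam := by
  set g : ℝ → ℝ := fun s => Real.log (1 + s) - Real.log (lam + s) with hg
  have hderiv : ∀ x ∈ Ici (0:ℝ), HasDerivAt g ((1 + x)⁻¹ - (lam + x)⁻¹) x := by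
    intro x hx
    have h1 : (0:ℝ) < 1 + x := by simp at hx; linarith
    have h2 : (0:ℝ) < lam + x := by simp at hx; linarith
    have d1 : HasDerivAt (fun s : ℝ => Real.log (1 + s)) (1 / (1 + x)) x := by
      simpa using ((hasDerivAt_id x).const_add 1).log h1.ne'
    have d2 : HasDerivAt (fun s : ℝ => Real.log (lam + s)) (1 / (lam + x)) x := by
      simpa using ((hasDerivAt_id x).const_add lam).log h2.ne'
    have := d1.sub d2; simp only [one_div] at this; exact this
  have htend : Tendsto g atTop (nhds 0) := by
    have h1 : Tendsto (fun s : ℝ => 1 + (1 - lam) / (lam + s)) atTop (nhds 1) := by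
      have : Tendsto (fun s : ℝ => (1 - lam) / (lam + s)) atTop (nhds 0) := by
        apply Tendsto.div_atTop tendsto_const_nhds
        exact tendsto_atTop_add_const_left _ _ tendsto_id
      simpa using tendsto_const_nhds.add this
    have h2 : Tendsto (fun s : ℝ => Real.log (1 + (1 - lam) / (lam + s))) atTop (nhds 0) := by
      have := (Real.continuousAt_log (by norm_num : (1:ℝ) ≠ 0)).tendsto.comp h1
      rw [Real.log_one] at this; exact this
    apply h2.congr'
    filter_upwards [Ioi_mem_atTop (0:ℝ)] with s hs
    have h1' : (0:ℝ) < 1 + s := by simp at hs; linarith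
    have h2' : (0:ℝ) < lam + s := by simp at hs; linarith
    have : 1 + (1 - lam) / (lam + s) = (1 + s) / (lam + s) := by
      field_simp; ring
    rw [this, Real.log_div h1'.ne' h2'.ne']
  have hg0 : g 0 = - Real.log lam := by simp [hg]
  rcases le_total 1 lam with hl | hl
  · have hpos : ∀ x ∈ Ioi (0:ℝ), 0 ≤ (1 + x)⁻¹ - (lam + x)⁻¹ := by
      intro x hx
      have h1 : (0:ℝ) < 1 + x := by simp at hx; linarith
      have : (lam + x)⁻¹ ≤ (1 + x)⁻¹ := by
        apply inv_anti₀ h1; linarith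
      linarith
    refine ⟨integrableOn_Ioi_deriv_of_nonneg' hderiv hpos htend, ?_⟩
    rw [integral_Ioi_of_hasDerivAt_of_nonneg' hderiv hpos htend, hg0]; ring
  · have hneg : ∀ x ∈ Ioi (0:ℝ), (1 + x)⁻¹ - (lam + x)⁻¹ ≤ 0 := by
      intro x hx
      have h2 : (0:ℝ) < lam + x := by simp at hx; linarith
      have : (1 + x)⁻¹ ≤ (lam + x)⁻¹ := by
        apply inv_anti₀ h2; linarith
      linarith
    refine ⟨integrableOn_Ioi_deriv_of_nonpos' hderiv hneg htend, ?_⟩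
    rw [integral_Ioi_of_hasDerivAt_of_nonpos' hderiv hneg htend, hg0]; ring

lemma diag_sum_single {d : ℕ} (c : Fin d → ℂ) :
    Matrix.diagonal c = ∑ i, c i • Matrix.diagonal (Pi.single i 1 : Fin d → ℂ) := by
  ext i j
  simp only [Matrix.diagonal_apply, Matrix.sum_apply, Matrix.smul_apply, Pi.single_apply,
    smul_eq_mul]
  by_cases h : i = j
  · subst h; simp
  · simp [h]

lemma sum_smul_conj {d : ℕ} (U V : Matrix (Fin d) (Fin d) ℂ) (c : Fin d → ℂ) :
    ∑ i, c i • (U * Matrix.diagonal (Pi.single i 1) * V) = U * Matrix.diagonal c * V := by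
  rw [diag_sum_single c, Finset.mul_sum, Finset.sum_mul]
  congr 1; ext i
  rw [Matrix.mul_smul, Matrix.smul_mul]

lemma key_eq {d : ℕ} (A : Matrix (Fin d) (Fin d) ℂ) (hA : A.PosDef) (s : ℝ) (hs : 0 < s) :
    (1 + s)⁻¹ • (1 : Matrix (Fin d) (Fin d) ℂ)
      - (A + s • (1 : Matrix (Fin d) (Fin d) ℂ))⁻¹
    = (hA.1.eigenvectorUnitary : Matrix (Fin d) (Fin d) ℂ) *
        Matrix.diagonal (fun i => (((1 + s)⁻¹ - (hA.1.eigenvalues i + s)⁻¹ : ℝ) : ℂ)) *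
        (star hA.1.eigenvectorUnitary : Matrix (Fin d) (Fin d) ℂ) := by
  set U : Matrix (Fin d) (Fin d) ℂ := (hA.1.eigenvectorUnitary : Matrix (Fin d) (Fin d) ℂ)
  have hU : U * star U = 1 := Matrix.mem_unitaryGroup_iff.mp hA.1.eigenvectorUnitary.2
  have hU' : star U * U = 1 := Matrix.mem_unitaryGroup_iff'.mp hA.1.eigenvectorUnitary.2
  have cancel : ∀ X : Matrix (Fin d) (Fin d) ℂ, star U * (U * X) = X := by
    intro X; rw [← Matrix.mul_assoc, hU', one_mul]
  have hsmul : ∀ r : ℝ, r • (1 : Matrix (Fin d) (Fin d) ℂ)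
      = U * Matrix.diagonal (fun _ => ((r : ℝ) : ℂ)) * star U := by
    intro r
    have h1 : Matrix.diagonal (fun _ : Fin d => ((r : ℝ) : ℂ))
        = ((r : ℝ) : ℂ) • (1 : Matrix (Fin d) (Fin d) ℂ) := by
      rw [Matrix.smul_one_eq_diagonal]
    rw [h1, Matrix.mul_smul, Matrix.smul_mul, mul_one, hU]
    ext i j
    simp [Matrix.smul_apply, Complex.real_smul]
  have hAs : A + s • (1 : Matrix (Fin d) (Fin d) ℂ)
      = U * Matrix.diagonal (fun i => ((hA.1.eigenvalues i + s : ℝ) : ℂ)) * star U := by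
    nth_rewrite 1 [hA.1.spectral_theorem]
    rw [Unitary.conjStarAlgAut_apply]
    rw [hsmul s, ← Matrix.add_mul, ← Matrix.mul_add, Matrix.diagonal_add]
    have : (fun i => (RCLike.ofReal ∘ hA.1.eigenvalues) i + ((s : ℝ) : ℂ))
        = fun i => ((hA.1.eigenvalues i + s : ℝ) : ℂ) := by
      funext i; simp [Function.comp]
    rw [this]
  have hinv : (A + s • (1 : Matrix (Fin d) (Fin d) ℂ))⁻¹
      = U * Matrix.diagonal (fun i => (((hA.1.eigenvalues i + s : ℝ) : ℂ))⁻¹) * star U := by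
    apply Matrix.inv_eq_right_inv
    rw [hAs]
    simp only [Matrix.mul_assoc]
    rw [cancel]
    rw [← Matrix.mul_assoc (Matrix.diagonal _), Matrix.diagonal_mul_diagonal]
    have : (fun i => ((hA.1.eigenvalues i + s : ℝ) : ℂ) * ((hA.1.eigenvalues i + s : ℝ) : ℂ)⁻¹)
        = fun _ => (1 : ℂ) := by
      funext i
      have hpos : (0 : ℝ) < hA.1.eigenvalues i + s := add_pos (hA.eigenvalues_pos i) hs
      rw [mul_inv_cancel₀]
      exact_mod_cast hpos.ne'
    rw [this, Matrix.diagonal_one, one_mul, hU]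
  rw [hsmul ((1 + s)⁻¹), hinv, ← Matrix.sub_mul, ← Matrix.mul_sub]
  have : (Matrix.diagonal fun _ : Fin d => (((1 + s)⁻¹ : ℝ) : ℂ))
      - Matrix.diagonal (fun i => (((hA.1.eigenvalues i + s : ℝ) : ℂ))⁻¹)
      = Matrix.diagonal (fun i => (((1 + s)⁻¹ - (hA.1.eigenvalues i + s)⁻¹ : ℝ) : ℂ)) := by
    rw [Matrix.diagonal_sub]
    congr 1
    funext i
    push_cast
    ring
  rw [this]

/-- Integral representation of the matrix logarithm: for positive definite `A`,
`log A = ∫₀^∞ ((1+s)⁻¹·I − (A+sI)⁻¹) ds`, the integral converging in the Bochner sense. -/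
theorem matLog_eq_integral {d : ℕ} (A : Matrix (Fin d) (Fin d) ℂ) (hA : A.PosDef) :
    IntegrableOn
        (fun s : ℝ => (1 + s)⁻¹ • (1 : Matrix (Fin d) (Fin d) ℂ)
          - (A + s • (1 : Matrix (Fin d) (Fin d) ℂ))⁻¹) (Set.Ioi 0) volume ∧
      matLog A = ∫ s in Set.Ioi (0 : ℝ),
        ((1 + s)⁻¹ • (1 : Matrix (Fin d) (Fin d) ℂ)
          - (A + s • (1 : Matrix (Fin d) (Fin d) ℂ))⁻¹) := by
  set U : Matrix (Fin d) (Fin d) ℂ := (hA.1.eigenvectorUnitary : Matrix (Fin d) (Fin d) ℂ)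
    with hUdef
  set M : Fin d → Matrix (Fin d) (Fin d) ℂ :=
    fun i => U * Matrix.diagonal (Pi.single i 1) * star U with hM
  have hscal := fun i => scalar_aux (hA.eigenvalues_pos i)
  have hint : ∀ i : Fin d, IntegrableOn
      (fun s : ℝ => (((1 + s)⁻¹ - (hA.1.eigenvalues i + s)⁻¹ : ℝ) : ℂ) • M i)
      (Set.Ioi 0) volume :=
    fun i => ((hscal i).1.ofReal (𝕜 := ℂ)).smul_const (M i)
  have hsum : IntegrableOn
      (fun s : ℝ => ∑ i, (((1 + s)⁻¹ - (hA.1.eigenvalues i + s)⁻¹ : ℝ) : ℂ) • M i)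
      (Set.Ioi 0) volume := integrable_finset_sum _ (fun i _ => hint i)
  have heq : Set.EqOn
      (fun s : ℝ => (1 + s)⁻¹ • (1 : Matrix (Fin d) (Fin d) ℂ)
          - (A + s • (1 : Matrix (Fin d) (Fin d) ℂ))⁻¹)
      (fun s : ℝ => ∑ i, (((1 + s)⁻¹ - (hA.1.eigenvalues i + s)⁻¹ : ℝ) : ℂ) • M i)
      (Set.Ioi 0) := by
    intro s hs
    simp only
    rw [key_eq A hA s hs, ← sum_smul_conj]
  constructor
  · exact hsum.congr_fun (fun s hs => (heq hs).symm) measurableSet_Ioi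
  · rw [setIntegral_congr_fun measurableSet_Ioi heq,
      integral_finset_sum _ (fun i _ => hint i)]
    have hterm : ∀ i : Fin d,
        (∫ s in Set.Ioi (0:ℝ), (((1 + s)⁻¹ - (hA.1.eigenvalues i + s)⁻¹ : ℝ) : ℂ) • M i)
          = ((Real.log (hA.1.eigenvalues i) : ℂ)) • M i := by
      intro i
      rw [integral_smul_const]
      congr 1
      rw [← (hscal i).2]
      exact integral_ofReal
    simp only [hterm]
    rw [sum_smul_conj]
    rw [matLog, dif_pos hA.1]
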